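/- Let C, C' be configurations of a variation Γ (connected finite sets of positions containing the origin), v ∈ C a node, and t a time with d_C(v_gen, v) ≤ t, where v_gen is the origin. Then ai(v,t,C) = ai(v,t,C') ≠ Q (i.e., C ≡'_{t,v} C') if and only if (1) C' is a consistent extension of M(v,t,C) and (2) M(v,t,C') \ M(v,t,C) = ∅. -/

import Mathlib

open scoped Classical

/-- Two grid positions are adjacent iff their L1 distance is 1. -/
def gridAdj (p q : ℤ × ℤ) : Prop := |p.1 - q.1| + |p.2 - q.2| = 1

lemma gridAdj_symm {p q : ℤ × ℤ} (h : gridAdj p q) : gridAdj q p := by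
  unfold gridAdj at h ⊢
  rw [abs_sub_comm q.1 p.1, abs_sub_comm q.2 p.2]
  exact h

lemma gridAdj_irrefl (p : ℤ × ℤ) : ¬ gridAdj p p := by simp [gridAdj]

/-- The graph induced on a set `X` of grid positions. -/
def gridGraph (X : Set (ℤ × ℤ)) : SimpleGraph (ℤ × ℤ) where
  Adj p q := p ∈ X ∧ q ∈ X ∧ gridAdj p q
  symm := ⟨fun p q h => ⟨h.2.1, h.1, gridAdj_symm h.2.2⟩⟩
  loopless := ⟨fun p h => gridAdj_irrefl p h.2.2⟩

/-- Graph distance inside the set `X`. -/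
noncomputable def gdist (X : Set (ℤ × ℤ)) (p q : ℤ × ℤ) : ℕ := (gridGraph X).dist p q

/-- The boundary condition of `p` in `X`: it records which of the four
neighbors of `p` lie in `X`. -/
def bcond (X : Set (ℤ × ℤ)) (p : ℤ × ℤ) : Set (ℤ × ℤ) := {q ∈ X | gridAdj p q}

/-- The set `M(v, t, X)` of nodes `w` with `d(v_gen, w) + d(w, v) ≤ t`. -/
noncomputable def Mset (v : ℤ × ℤ) (t : ℕ) (X : Set (ℤ × ℤ)) : Set (ℤ × ℤ) :=
  {w ∈ X | gdist X (0, 0) w + gdist X w v ≤ t}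

/-- The available information (local map) `ai(v, t, X)`; `none` plays the role of `Q`. -/
noncomputable def ai (v : ℤ × ℤ) (t : ℕ) (X : Set (ℤ × ℤ)) :
    Option (ℕ × (ℤ × ℤ) × Set ((ℤ × ℤ) × Set (ℤ × ℤ))) :=
  if v ∈ X ∧ (gridGraph X).Reachable (0, 0) v ∧ gdist X (0, 0) v ≤ t then
    some (t, v, (fun w => (w, bcond X w)) '' Mset v t X)
  else none

/-- `X ≡'_{t,v} Y` : `v ∈ X ∩ Y` and `ai(v,t,X) = ai(v,t,Y) ≠ Q`. -/
def equivAt (t : ℕ) (v : ℤ × ℤ) (X Y : Set (ℤ × ℤ)) : Prop :=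
  v ∈ X ∧ v ∈ Y ∧ ai v t X = ai v t Y ∧ ai v t X ≠ none

/-- A configuration: a finite connected set of positions containing the origin. -/
def IsConfig (X : Set (ℤ × ℤ)) : Prop :=
  X.Finite ∧ (0, 0) ∈ X ∧ ∀ p ∈ X, ∀ q ∈ X, (gridGraph X).Reachable p q

/-- `Y` is a consistent extension of the subset `M` of `X`. -/
def ConsExt (X M Y : Set (ℤ × ℤ)) : Prop := M ⊆ Y ∧ ∀ w ∈ M, bcond X w = bcond Y w


open SimpleGraph in
lemma walk_support_mem {X : Set (ℤ × ℤ)} {a b : ℤ × ℤ} (ha : a ∈ X)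
    (p : (gridGraph X).Walk a b) : ∀ x ∈ p.support, x ∈ X := by
  induction p with
  | nil => simpa using ha
  | cons h q ih =>
    intro x hx
    rw [SimpleGraph.Walk.support_cons, List.mem_cons] at hx
    rcases hx with rfl | hx
    · exact ha
    · exact ih h.2.1 x hx

lemma mem_support_dist_le {V : Type*} {G : SimpleGraph V} [DecidableEq V] {a b x : V}
    (p : G.Walk a b) (hx : x ∈ p.support) : G.dist a x + G.dist x b ≤ p.length := by
  have h1 := SimpleGraph.dist_le (p.takeUntil x hx)
  have h2 := SimpleGraph.dist_le (p.dropUntil x hx)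
  have h3 : (p.takeUntil x hx).length + (p.dropUntil x hx).length = p.length := by
    rw [← SimpleGraph.Walk.length_append, SimpleGraph.Walk.take_spec]
  omega

lemma dist_triangle'' {V : Type*} {G : SimpleGraph V} {u v w : V}
    (h1 : G.Reachable u v) (h2 : G.Reachable v w) :
    G.dist u w ≤ G.dist u v + G.dist v w := by
  obtain ⟨p, hp⟩ := h1.exists_walk_length_eq_dist
  obtain ⟨q, hq⟩ := h2.exists_walk_length_eq_dist
  have := SimpleGraph.dist_le (p.append q)
  rwa [SimpleGraph.Walk.length_append, hp, hq] at this

lemma walk_transfer {X Y S : Set (ℤ × ℤ)}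
    (hSY : S ⊆ Y) (hbc : ∀ w ∈ S, bcond X w = bcond Y w)
    {a b : ℤ × ℤ} (p : (gridGraph X).Walk a b) (hsup : ∀ x ∈ p.support, x ∈ S) :
    ∃ q : (gridGraph Y).Walk a b, q.length = p.length := by
  induction p with
  | nil => exact ⟨.nil, rfl⟩
  | @cons u x w h q ih =>
    have hu : u ∈ S := hsup u (by simp)
    have hx : x ∈ S := hsup x (by simp [SimpleGraph.Walk.support_cons])
    obtain ⟨q', hq'⟩ := ih (fun y hy => hsup y (by simp [SimpleGraph.Walk.support_cons, hy]))
    have hxb : x ∈ bcond X u := ⟨h.2.1, h.2.2⟩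
    rw [hbc u hu] at hxb
    exact ⟨.cons ⟨hSY hu, hxb.1, hxb.2⟩ q', congrArg (· + 1) hq'⟩

theorem stmt2 (C C' : Set (ℤ × ℤ)) (hC : IsConfig C) (hC' : IsConfig C')
    (v : ℤ × ℤ) (hv : v ∈ C) (t : ℕ) (ht : gdist C (0, 0) v ≤ t) :
    equivAt t v C C' ↔
      ConsExt C (Mset v t C) C' ∧ Mset v t C' \ Mset v t C = ∅ := by
  classical
  have horig : (0, 0) ∈ C := hC.2.1
  have hreach := hC.2.2
  have hcond : v ∈ C ∧ (gridGraph C).Reachable (0, 0) v ∧ gdist C (0, 0) v ≤ t :=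
    ⟨hv, hreach _ horig v hv, ht⟩
  have haiC : ai v t C = some (t, v, (fun w => (w, bcond C w)) '' Mset v t C) := by
    rw [ai, if_pos hcond]
  have hvM : v ∈ Mset v t C := by
    refine ⟨hv, ?_⟩
    have : gdist C v v = 0 := SimpleGraph.dist_self
    omega
  have h0M : (0, 0) ∈ Mset v t C := by
    refine ⟨horig, ?_⟩
    have : gdist C (0, 0) (0, 0) = 0 := SimpleGraph.dist_self
    omega
  constructor
  · rintro ⟨-, hvC', haieq, hne⟩
    rw [haiC] at haieq
    have hcond' : v ∈ C' ∧ (gridGraph C').Reachable (0, 0) v ∧ gdist C' (0, 0) v ≤ t := by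
      by_contra hcon
      rw [ai, if_neg hcon] at haieq
      exact (Option.some_ne_none _) haieq
    rw [ai, if_pos hcond'] at haieq
    have himg : (fun w => (w, bcond C w)) '' Mset v t C
        = (fun w => (w, bcond C' w)) '' Mset v t C' := by
      have := Option.some.inj haieq
      exact (Prod.mk.injEq _ _ _ _ ▸ (Prod.mk.injEq _ _ _ _ ▸ this).2).2
    have hfwd : ∀ w ∈ Mset v t C, w ∈ Mset v t C' ∧ bcond C w = bcond C' w := by
      intro w hw
      have : (w, bcond C w) ∈ (fun w => (w, bcond C' w)) '' Mset v t C' := by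
        rw [← himg]; exact ⟨w, hw, rfl⟩
      obtain ⟨w', hw', hww⟩ := this
      have h1 : w' = w := congrArg Prod.fst hww
      subst h1
      exact ⟨hw', (congrArg Prod.snd hww).symm⟩
    have hbwd : ∀ w ∈ Mset v t C', w ∈ Mset v t C := by
      intro w hw
      have : (w, bcond C' w) ∈ (fun w => (w, bcond C w)) '' Mset v t C := by
        rw [himg]; exact ⟨w, hw, rfl⟩
      obtain ⟨w', hw', hww⟩ := this
      have h1 : w' = w := congrArg Prod.fst hww
      subst h1; exact hw'
    refine ⟨⟨fun w hw => ((hfwd w hw).1).1, fun w hw => (hfwd w hw).2⟩, ?_⟩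
    exact Set.diff_eq_empty.mpr hbwd
  · rintro ⟨⟨hsub, hbc⟩, hdiff⟩
    -- distances in C' are bounded by distances in C for points of Mset v t C
    have key : ∀ w ∈ Mset v t C,
        ((gridGraph C').Reachable (0, 0) w ∧ gdist C' (0, 0) w ≤ gdist C (0, 0) w) ∧
          gdist C' w v ≤ gdist C w v := by
      intro w hw
      obtain ⟨hwC, hwd⟩ := hw
      constructor
      · obtain ⟨p, hp⟩ := (hreach _ horig w hwC).exists_walk_length_eq_dist
        have hsup : ∀ x ∈ p.support, x ∈ Mset v t C := by
          intro x hx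
          have hxC : x ∈ C := walk_support_mem horig p x hx
          have h1 : (gridGraph C).dist (0, 0) x + (gridGraph C).dist x w ≤ p.length :=
            mem_support_dist_le p hx
          have h2 : (gridGraph C).dist x v ≤ (gridGraph C).dist x w + (gridGraph C).dist w v :=
            dist_triangle'' (hreach _ hxC w hwC) (hreach _ hwC v hv)
          have h3 : p.length = gdist C (0, 0) w := hp
          refine ⟨hxC, ?_⟩
          simp only [gdist] at *
          omega
        obtain ⟨q, hq⟩ := walk_transfer hsub hbc p hsup
        refine ⟨⟨q⟩, ?_⟩
        show (gridGraph C').dist (0, 0) w ≤ (gridGraph C).dist (0, 0) w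
        rw [← hp, ← hq]
        exact SimpleGraph.dist_le q
      · obtain ⟨p, hp⟩ := (hreach _ hwC v hv).exists_walk_length_eq_dist
        have hsup : ∀ x ∈ p.support, x ∈ Mset v t C := by
          intro x hx
          have hxC : x ∈ C := walk_support_mem hwC p x hx
          have h1 : (gridGraph C).dist w x + (gridGraph C).dist x v ≤ p.length :=
            mem_support_dist_le p hx
          have h2 : (gridGraph C).dist (0, 0) x
              ≤ (gridGraph C).dist (0, 0) w + (gridGraph C).dist w x :=
            dist_triangle'' (hreach _ horig w hwC) (hreach _ hwC x hxC)
          have h3 : p.length = gdist C w v := hp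
          refine ⟨hxC, ?_⟩
          simp only [gdist] at *
          omega
        obtain ⟨q, hq⟩ := walk_transfer hsub hbc p hsup
        show (gridGraph C').dist w v ≤ (gridGraph C).dist w v
        rw [← hp, ← hq]
        exact SimpleGraph.dist_le q
    have hMsub : Mset v t C ⊆ Mset v t C' := by
      intro w hw
      obtain ⟨⟨-, h1⟩, h2⟩ := key w hw
      exact ⟨hsub hw, by have := hw.2; omega⟩
    have hMeq : Mset v t C' = Mset v t C :=
      Set.Subset.antisymm (Set.diff_eq_empty.mp hdiff) hMsub
    have hvC' : v ∈ C' := hsub hvM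
    have hcond' : v ∈ C' ∧ (gridGraph C').Reachable (0, 0) v ∧ gdist C' (0, 0) v ≤ t := by
      obtain ⟨⟨hr, hd⟩, -⟩ := key v hvM
      exact ⟨hvC', hr, le_trans hd ht⟩
    refine ⟨hv, hvC', ?_, by rw [haiC]; exact Option.some_ne_none _⟩
    rw [haiC, ai, if_pos hcond', hMeq]
    have himg : (fun w => (w, bcond C w)) '' Mset v t C
        = (fun w => (w, bcond C' w)) '' Mset v t C :=
      Set.image_congr (fun a ha => by rw [hbc a ha])
    rw [himg]
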